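/- Let n = 3, a₁ = -1, a₃ = 1, a₂ ∈ ℝ. Suppose φ ∈ H¹(ℝ³)\{0} satisfies P(φ) = 0, where P(φ) = ‖∇φ‖² + (1/2)‖φ‖³_{L³} - (3a₂/4)‖φ‖⁴_{L⁴} - (9/10)‖φ‖⁵_{L⁵}. Then ∂²_λ S(φ^λ)|_{λ=1} = ‖∇φ‖² + (1/4)‖φ‖³_{L³} - (3a₂/2)‖φ‖⁴_{L⁴} - (63/20)‖φ‖⁵_{L⁵} = -‖∇φ‖² - (3/4)‖φ‖³_{L³} - (27/20)‖φ‖⁵_{L⁵} < 0. -/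

import Mathlib

open MeasureTheory

noncomputable def gradSq (n : ℕ) (v : EuclideanSpace ℝ (Fin n) → ℝ) : ℝ :=
  ∫ x, ‖fderiv ℝ v x‖^2

noncomputable def lpP (n : ℕ) (p : ℕ) (v : EuclideanSpace ℝ (Fin n) → ℝ) : ℝ :=
  ∫ x, |v x| ^ p

/-- Nehari functional `K`. -/
noncomputable def Kf (n : ℕ) (a₂ : ℝ) (v : EuclideanSpace ℝ (Fin n) → ℝ) : ℝ :=
  gradSq n v + lpP n 3 v - a₂ * lpP n 4 v - lpP n 5 v

noncomputable def Jf (n : ℕ) (v : EuclideanSpace ℝ (Fin n) → ℝ) : ℝ :=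
  (1/4) * gradSq n v + (1/12) * lpP n 3 v + (1/20) * lpP n 5 v

/-- Action functional `S`. -/
noncomputable def Sf (n : ℕ) (a₂ : ℝ) (v : EuclideanSpace ℝ (Fin n) → ℝ) : ℝ :=
  (1/2) * gradSq n v + (1/3) * lpP n 3 v - (a₂/4) * lpP n 4 v - (1/5) * lpP n 5 v

/-- Pohozhaev functional `P`. -/
noncomputable def Pf (n : ℕ) (a₂ : ℝ) (v : EuclideanSpace ℝ (Fin n) → ℝ) : ℝ :=
  gradSq n v + ((n : ℝ)/6) * lpP n 3 v - ((n : ℝ) * a₂/4) * lpP n 4 v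
    - (3 * (n : ℝ)/10) * lpP n 5 v

/-- Membership in `X = Ḣ¹ ∩ L³` together with the integrabilities needed to make
all the functionals well defined. -/
def Adm (n : ℕ) (v : EuclideanSpace ℝ (Fin n) → ℝ) : Prop :=
  Differentiable ℝ v ∧ MemLp (fun x => ‖fderiv ℝ v x‖) 2 volume ∧
    MemLp v 3 volume ∧ MemLp v 4 volume ∧ MemLp v 5 volume

/-- The rescaling `v^λ(x) = λ^{n/2} v (λ x)`. -/
noncomputable def scal (n : ℕ) (l : ℝ) (v : EuclideanSpace ℝ (Fin n) → ℝ) :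
    EuclideanSpace ℝ (Fin n) → ℝ :=
  fun x => l ^ ((n : ℝ)/2) * v (l • x)

lemma grad_scal (φ : EuclideanSpace ℝ (Fin 3) → ℝ) (hd : Differentiable ℝ φ)
    {l : ℝ} (hl : 0 < l) :
    gradSq 3 (scal 3 l φ) = l ^ (2:ℝ) * gradSq 3 φ := by
  have key : ∀ x : EuclideanSpace ℝ (Fin 3),
      ‖fderiv ℝ (scal 3 l φ) x‖^2 = l^5 * ‖fderiv ℝ φ (l • x)‖^2 := by
    intro x
    have hsm : HasFDerivAt (fun y : EuclideanSpace ℝ (Fin 3) => l • y)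
        (l • ContinuousLinearMap.id ℝ (EuclideanSpace ℝ (Fin 3))) x := by
      exact (l • ContinuousLinearMap.id ℝ (EuclideanSpace ℝ (Fin 3))).hasFDerivAt (x := x)
    have h1 : HasFDerivAt (fun y => φ (l • y)) (l • fderiv ℝ φ (l • x)) x := by
      have h := (hd (l • x)).hasFDerivAt.comp x hsm
      simp only [Function.comp_def] at h
      refine h.congr_fderiv ?_
      ext y; simp
    have h2 : HasFDerivAt (scal 3 l φ)
        ((l ^ (((3:ℕ):ℝ)/2) * l) • fderiv ℝ φ (l • x)) x := by
      have h := h1.const_mul (l ^ (((3:ℕ):ℝ)/2))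
      rw [smul_smul] at h
      exact h
    rw [h2.fderiv, norm_smul, Real.norm_eq_abs, abs_of_nonneg (by positivity)]
    have h32 : (l ^ (((3:ℕ):ℝ)/2))^2 = l^3 := by
      rw [← Real.rpow_natCast (l ^ (((3:ℕ):ℝ)/2)) 2, ← Real.rpow_mul hl.le]
      norm_num
    linear_combination (‖fderiv ℝ φ (l • x)‖^2 * l^2) * h32
  unfold gradSq
  simp_rw [key]
  rw [integral_const_mul,
    Measure.integral_comp_smul_of_nonneg volume (fun y => ‖fderiv ℝ φ y‖^2) l (hR := hl.le),
    finrank_euclideanSpace_fin, smul_eq_mul]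
  have : l ^ (2:ℝ) = l^5 * (l^3)⁻¹ := by
    rw [show (2:ℝ) = ((2:ℕ):ℝ) by norm_num, Real.rpow_natCast]
    field_simp
  rw [this]; ring_nf

lemma lp_scal (φ : EuclideanSpace ℝ (Fin 3) → ℝ) {l : ℝ} (hl : 0 < l) (p : ℕ) :
    lpP 3 p (scal 3 l φ) = l ^ ((3*(p:ℝ))/2 - 3) * lpP 3 p φ := by
  unfold lpP scal
  have h1 : ∀ x : EuclideanSpace ℝ (Fin 3), |l ^ (((3:ℕ):ℝ)/2) * φ (l • x)| ^ p
      = l ^ ((3*(p:ℝ))/2) * |φ (l • x)| ^ p := by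
    intro x
    rw [abs_mul, mul_pow, abs_of_nonneg (Real.rpow_nonneg hl.le _),
      ← Real.rpow_natCast (l ^ (((3:ℕ):ℝ)/2)) p, ← Real.rpow_mul hl.le]
    congr 1
    push_cast; ring
  simp_rw [h1]
  rw [integral_const_mul,
    Measure.integral_comp_smul_of_nonneg volume (fun y => |φ y| ^ p) l (hR := hl.le),
    finrank_euclideanSpace_fin, smul_eq_mul, ← mul_assoc]
  congr 1
  rw [show l^(3:ℕ) = l ^ ((3:ℕ):ℝ) by rw [Real.rpow_natCast],
    ← Real.rpow_neg hl.le, ← Real.rpow_add hl]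
  ring_nf

theorem stmt16 (a₂ : ℝ) (φ : EuclideanSpace ℝ (Fin 3) → ℝ)
    (hφ : Adm 3 φ) (hL2 : MemLp φ 2 volume) (hφ0 : φ ≠ 0)
    (hP : Pf 3 a₂ φ = 0) :
    deriv (deriv (fun l : ℝ => Sf 3 a₂ (scal 3 l φ))) 1
        = gradSq 3 φ + (1/4) * lpP 3 3 φ - (3*a₂/2) * lpP 3 4 φ
            - (63/20) * lpP 3 5 φ ∧
      gradSq 3 φ + (1/4) * lpP 3 3 φ - (3*a₂/2) * lpP 3 4 φ - (63/20) * lpP 3 5 φ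
        = -(gradSq 3 φ) - (3/4) * lpP 3 3 φ - (27/20) * lpP 3 5 φ ∧
      -(gradSq 3 φ) - (3/4) * lpP 3 3 φ - (27/20) * lpP 3 5 φ < 0 := by
  obtain ⟨hd, -, h3, -, -⟩ := hφ
  set G := gradSq 3 φ with hG
  set A := lpP 3 3 φ with hA
  set B := lpP 3 4 φ with hB
  set C := lpP 3 5 φ with hC
  -- the rescaled action as explicit function of l
  set g : ℝ → ℝ := fun l =>
    (1/2) * G * l ^ (2:ℝ) + (1/3) * A * l ^ ((3:ℝ)/2)
      - (a₂/4) * B * l ^ (3:ℝ) - (1/5) * C * l ^ ((9:ℝ)/2) with hg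
  set g' : ℝ → ℝ := fun l =>
    G * l + (1/2) * A * l ^ ((1:ℝ)/2)
      - (3*a₂/4) * B * l ^ (2:ℝ) - (9/10) * C * l ^ ((7:ℝ)/2) with hg'
  have hmem : Set.Ioi (0:ℝ) ∈ nhds (1:ℝ) := isOpen_Ioi.mem_nhds (by norm_num)
  have hSg : ∀ l ∈ Set.Ioi (0:ℝ), Sf 3 a₂ (scal 3 l φ) = g l := by
    intro l hl
    rw [Set.mem_Ioi] at hl
    unfold Sf
    rw [grad_scal φ hd hl, lp_scal φ hl 3, lp_scal φ hl 4, lp_scal φ hl 5, hg]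
    norm_num
    ring_nf
    rfl
  have hgd : ∀ l ∈ Set.Ioi (0:ℝ), HasDerivAt g (g' l) l := by
    intro l hl
    rw [Set.mem_Ioi] at hl
    have e2 : HasDerivAt (fun y : ℝ => (1/2) * G * y ^ (2:ℝ)) (G * l) l := by
      have h := (Real.hasDerivAt_rpow_const (x := l) (p := 2) (Or.inl hl.ne')).const_mul ((1/2)*G)
      refine h.congr_deriv ?_
      rw [show (2:ℝ) - 1 = (1:ℝ) by norm_num, Real.rpow_one]; ring
    have e32 : HasDerivAt (fun y : ℝ => (1/3) * A * y ^ ((3:ℝ)/2)) ((1/2) * A * l ^ ((1:ℝ)/2)) l := by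
      have h := (Real.hasDerivAt_rpow_const (x := l) (p := (3:ℝ)/2) (Or.inl hl.ne')).const_mul ((1/3)*A)
      refine h.congr_deriv ?_
      rw [show (3:ℝ)/2 - 1 = (1:ℝ)/2 by norm_num]; ring
    have e3 : HasDerivAt (fun y : ℝ => (a₂/4) * B * y ^ (3:ℝ)) ((3*a₂/4) * B * l ^ (2:ℝ)) l := by
      have h := (Real.hasDerivAt_rpow_const (x := l) (p := 3) (Or.inl hl.ne')).const_mul ((a₂/4)*B)
      refine h.congr_deriv ?_
      rw [show (3:ℝ) - 1 = (2:ℝ) by norm_num]; ring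
    have e92 : HasDerivAt (fun y : ℝ => (1/5) * C * y ^ ((9:ℝ)/2)) ((9/10) * C * l ^ ((7:ℝ)/2)) l := by
      have h := (Real.hasDerivAt_rpow_const (x := l) (p := (9:ℝ)/2) (Or.inl hl.ne')).const_mul ((1/5)*C)
      refine h.congr_deriv ?_
      rw [show (9:ℝ)/2 - 1 = (7:ℝ)/2 by norm_num]; ring
    exact ((e2.add e32).sub e3).sub e92
  have hg'd : HasDerivAt g' (G + (1/4) * A - (3*a₂/2) * B - (63/20) * C) 1 := by
    have e1 : HasDerivAt (fun y : ℝ => G * y) G 1 := by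
      simpa using (hasDerivAt_id (1:ℝ)).const_mul G
    have e12 : HasDerivAt (fun y : ℝ => (1/2) * A * y ^ ((1:ℝ)/2)) ((1/4) * A) 1 := by
      have h := (Real.hasDerivAt_rpow_const (x := (1:ℝ)) (p := (1:ℝ)/2) (Or.inl one_ne_zero)).const_mul ((1/2)*A)
      refine h.congr_deriv ?_
      rw [Real.one_rpow]; ring
    have e2 : HasDerivAt (fun y : ℝ => (3*a₂/4) * B * y ^ (2:ℝ)) ((3*a₂/2) * B) 1 := by
      have h := (Real.hasDerivAt_rpow_const (x := (1:ℝ)) (p := 2) (Or.inl one_ne_zero)).const_mul ((3*a₂/4)*B)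
      refine h.congr_deriv ?_
      rw [Real.one_rpow]; ring
    have e72 : HasDerivAt (fun y : ℝ => (9/10) * C * y ^ ((7:ℝ)/2)) ((63/20) * C) 1 := by
      have h := (Real.hasDerivAt_rpow_const (x := (1:ℝ)) (p := (7:ℝ)/2) (Or.inl one_ne_zero)).const_mul ((9/10)*C)
      refine h.congr_deriv ?_
      rw [Real.one_rpow]; ring
    exact ((e1.add e12).sub e2).sub e72
  have hev : (fun l : ℝ => Sf 3 a₂ (scal 3 l φ)) =ᶠ[nhds 1] g :=
    Filter.eventuallyEq_of_mem hmem hSg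
  have hev2 : deriv (fun l : ℝ => Sf 3 a₂ (scal 3 l φ)) =ᶠ[nhds 1] g' :=
    (hev.deriv).trans (Filter.eventuallyEq_of_mem hmem (fun l hl => (hgd l hl).deriv))
  have hd2 : deriv (deriv (fun l : ℝ => Sf 3 a₂ (scal 3 l φ))) 1
      = G + (1/4) * A - (3*a₂/2) * B - (63/20) * C := by
    rw [hev2.deriv_eq, hg'd.deriv]
  -- positivity facts
  have hGnn : 0 ≤ G := integral_nonneg (fun x => by positivity)
  have hCnn : 0 ≤ C := integral_nonneg (fun x => by positivity)
  have hApos : 0 < A := by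
    have hInt : Integrable (fun x => |φ x| ^ (3:ℕ)) volume := by
      have := h3.integrable_norm_rpow (by norm_num) (by norm_num)
      simp only [ENNReal.toReal_ofNat] at this
      convert this using 2 with x
      rw [Real.norm_eq_abs, ← Real.rpow_natCast |φ x| 3]
      norm_num
    have hsupp : 0 < volume (Function.support fun x => |φ x| ^ (3:ℕ)) := by
      obtain ⟨x₀, hx₀⟩ : ∃ x, φ x ≠ 0 := by
        by_contra h
        push_neg at h
        exact hφ0 (funext fun x => h x)
      have hU : IsOpen {x : EuclideanSpace ℝ (Fin 3) | φ x ≠ 0} :=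
        isOpen_ne.preimage hd.continuous
      have hsub : {x : EuclideanSpace ℝ (Fin 3) | φ x ≠ 0}
          ⊆ Function.support fun x => |φ x| ^ (3:ℕ) := by
        intro x hx
        simp only [Function.mem_support]
        exact pow_ne_zero _ (abs_ne_zero.mpr hx)
      exact lt_of_lt_of_le (hU.measure_pos volume ⟨x₀, hx₀⟩) (measure_mono hsub)
    exact ((integral_pos_iff_support_of_nonneg (fun x => by positivity) hInt).2 hsupp)
  have hPf : G + (1/2) * A - (3*a₂/4) * B - (9/10) * C = 0 := by
    have := hP
    unfold Pf at this
    norm_num at this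
    linarith
  refine ⟨hd2, by linarith, by linarith⟩
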